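/- Let k, ℓ ∈ ℕ and for 1 ≤ i ≤ ℓ and 1 ≤ j ≤ k+1 let X_{i,j} ∈ ℂ[[σ]] be convergent power series. If X = Σ_{i=1}^{ℓ} Π_{j=1}^{k+1} X_{i,j} has coefficient sequence (xₙ), then xₙ = O(nᵏ) as n → ∞. -/

import Mathlib

/-- A formal power series over `ℂ` is convergent if its sequence of partial sums
converges. -/
def Convergent (X : PowerSeries ℂ) : Prop :=
  ∃ l : ℂ, Filter.Tendsto (fun N : ℕ => ∑ n ∈ Finset.range N, PowerSeries.coeff n X)
    Filter.atTop (nhds l)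

lemma convergent_coeff_bounded {X : PowerSeries ℂ} (h : Convergent X) :
    ∃ C : ℝ, ∀ n : ℕ, ‖PowerSeries.coeff n X‖ ≤ C := by
  obtain ⟨l, hl⟩ := h
  have h2 : Filter.Tendsto (fun n : ℕ => PowerSeries.coeff n X) Filter.atTop (nhds 0) := by
    have := ((hl.comp (Filter.tendsto_add_atTop_nat 1)).sub hl)
    rw [sub_self] at this
    convert this using 2 with n
    simp [Finset.sum_range_succ]
  have h3 := (h2.norm.bddAbove_range)
  obtain ⟨C, hC⟩ := h3
  exact ⟨C, fun n => hC ⟨n, rfl⟩⟩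

lemma coeff_prod_bound (m : ℕ) (Y : Fin (m + 1) → PowerSeries ℂ) (M : ℝ)
    (hM : ∀ j n, ‖PowerSeries.coeff n (Y j)‖ ≤ M) (n : ℕ) :
    ‖PowerSeries.coeff n (∏ j : Fin (m + 1), Y j)‖ ≤ M ^ (m + 1) * (n + 1 : ℝ) ^ m := by
  have hM0 : 0 ≤ M := le_trans (norm_nonneg _) (hM 0 0)
  clear hM0
  induction m generalizing n with
  | zero => simpa using hM 0 n
  | succ m ih =>
    have hM0 : 0 ≤ M := le_trans (norm_nonneg _) (hM 0 0)
    rw [Fin.prod_univ_succ, PowerSeries.coeff_mul]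
    calc ‖∑ p ∈ Finset.HasAntidiagonal.antidiagonal n,
          PowerSeries.coeff p.1 (Y 0) * PowerSeries.coeff p.2 (∏ j : Fin (m+1), Y j.succ)‖
        ≤ ∑ p ∈ Finset.HasAntidiagonal.antidiagonal n,
          ‖PowerSeries.coeff p.1 (Y 0) * PowerSeries.coeff p.2 (∏ j : Fin (m+1), Y j.succ)‖ :=
          norm_sum_le _ _
      _ ≤ ∑ p ∈ Finset.HasAntidiagonal.antidiagonal n, M * (M ^ (m + 1) * (n + 1 : ℝ) ^ m) := by
          apply Finset.sum_le_sum
          intro p hp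
          rw [norm_mul]
          have h1 : ‖PowerSeries.coeff p.1 (Y 0)‖ ≤ M := hM 0 p.1
          have h2 := ih (fun j => Y j.succ) (fun j n => hM j.succ n) p.2
          have hp2 : (p.2 : ℝ) + 1 ≤ (n : ℝ) + 1 := by
            have := Finset.HasAntidiagonal.antidiagonal.snd_le hp
            have : (p.2 : ℝ) ≤ n := by exact_mod_cast this
            linarith
          have h3 : ((p.2 : ℝ) + 1) ^ m ≤ ((n : ℝ) + 1) ^ m :=
            pow_le_pow_left₀ (by positivity) hp2 m
          have h4 : ‖PowerSeries.coeff p.2 (∏ j : Fin (m+1), Y j.succ)‖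
              ≤ M ^ (m + 1) * (n + 1 : ℝ) ^ m :=
            h2.trans (by
              apply mul_le_mul_of_nonneg_left h3 (by positivity))
          exact mul_le_mul h1 h4 (norm_nonneg _) hM0
      _ = (n + 1 : ℝ) * (M * (M ^ (m + 1) * (n + 1 : ℝ) ^ m)) := by
          rw [Finset.sum_const, Finset.Nat.card_antidiagonal]
          ring
      _ = M ^ (m + 1 + 1) * (n + 1 : ℝ) ^ (m + 1) := by ring

theorem coeff_sum_prod_convergent_isBigO (k ℓ : ℕ)
    (X : Fin ℓ → Fin (k + 1) → PowerSeries ℂ)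
    (hX : ∀ i j, Convergent (X i j)) :
    (fun n : ℕ => PowerSeries.coeff n (∑ i : Fin ℓ, ∏ j : Fin (k + 1), X i j))
      =O[Filter.atTop] (fun n : ℕ => (n : ℝ) ^ k) := by
  choose C hC using fun i j => convergent_coeff_bounded (hX i j)
  set M : ℝ := 1 + ∑ p : Fin ℓ × Fin (k + 1), max (C p.1 p.2) 0 with hMdef
  have hM0 : 0 ≤ M := by
    have : (0 : ℝ) ≤ ∑ p : Fin ℓ × Fin (k + 1), max (C p.1 p.2) 0 :=
      Finset.sum_nonneg fun p _ => le_max_right _ _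
    linarith
  have hMb : ∀ i j n, ‖PowerSeries.coeff n (X i j)‖ ≤ M := by
    intro i j n
    have h1 : C i j ≤ ∑ p : Fin ℓ × Fin (k + 1), max (C p.1 p.2) 0 := by
      have := Finset.single_le_sum (f := fun p : Fin ℓ × Fin (k + 1) => max (C p.1 p.2) 0)
        (fun p _ => le_max_right _ _) (Finset.mem_univ (i, j))
      exact le_trans (le_max_left _ _) this
    have := hC i j n
    linarith
  have hbound : ∀ n : ℕ,
      ‖PowerSeries.coeff n (∑ i : Fin ℓ, ∏ j : Fin (k + 1), X i j)‖
        ≤ (ℓ : ℝ) * (M ^ (k + 1) * (n + 1 : ℝ) ^ k) := by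
    intro n
    rw [map_sum]
    calc ‖∑ i : Fin ℓ, PowerSeries.coeff n (∏ j : Fin (k + 1), X i j)‖
        ≤ ∑ i : Fin ℓ, ‖PowerSeries.coeff n (∏ j : Fin (k + 1), X i j)‖ := norm_sum_le _ _
      _ ≤ ∑ _i : Fin ℓ, M ^ (k + 1) * (n + 1 : ℝ) ^ k :=
          Finset.sum_le_sum fun i _ => coeff_prod_bound k (X i) M (hMb i) n
      _ = (ℓ : ℝ) * (M ^ (k + 1) * (n + 1 : ℝ) ^ k) := by
          rw [Finset.sum_const, Finset.card_univ, Fintype.card_fin]; simp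
  rw [Asymptotics.isBigO_iff]
  refine ⟨(ℓ : ℝ) * (M ^ (k + 1) * 2 ^ k), ?_⟩
  filter_upwards [Filter.eventually_ge_atTop 1] with n hn
  have h1 : ((n : ℝ) + 1) ^ k ≤ (2 * n : ℝ) ^ k := by
    apply pow_le_pow_left₀ (by positivity)
    have : (1 : ℝ) ≤ n := by exact_mod_cast hn
    linarith
  calc ‖PowerSeries.coeff n (∑ i : Fin ℓ, ∏ j : Fin (k + 1), X i j)‖
      ≤ (ℓ : ℝ) * (M ^ (k + 1) * (n + 1 : ℝ) ^ k) := hbound n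
    _ ≤ (ℓ : ℝ) * (M ^ (k + 1) * (2 * n : ℝ) ^ k) := by
        apply mul_le_mul_of_nonneg_left _ (by positivity)
        exact mul_le_mul_of_nonneg_left h1 (by positivity)
    _ = (ℓ : ℝ) * (M ^ (k + 1) * 2 ^ k) * ‖(n : ℝ) ^ k‖ := by
        rw [mul_pow, Real.norm_eq_abs, abs_of_nonneg (by positivity)]
        ring
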